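/- arXiv:2511.10569 — 10 statements merged into one kernel-verified Lean document; each statement's English description precedes it below -/
import Mathlib

section
/- Let M be a right R-module with endomorphism ring S = End_R(M). Suppose M is image-projective and generates its kernels. If f ∈ S and e ∈ S is an idempotent such that the right annihilator of f in S equals eS, then ker f = eM. -/
/-- `M` is image-projective: inclusion of images of endomorphisms implies
membership in the corresponding principal right ideal of `End R M`. -/
def ImageProjective (R M : Type*) [Ring R] [AddCommGroup M] [Module R M] : Prop :=
  ∀ f g : Module.End R M, LinearMap.range f ≤ LinearMap.range g → ∃ s : Module.End R M, f = g * s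

/-- `M` generates its kernels: for every endomorphism `f`, `ker f` is the sum of the
images of endomorphisms whose image is contained in `ker f`. -/
def GeneratesKernels (R M : Type*) [Ring R] [AddCommGroup M] [Module R M] : Prop :=
  ∀ f : Module.End R M,
    LinearMap.ker f =
      ⨆ γ ∈ {γ : Module.End R M | LinearMap.range γ ≤ LinearMap.ker f}, LinearMap.range γ
/-- Right annihilator of an element as a set. -/
def rAnn (S : Type*) [Ring S] (a : S) : Set S := {x : S | a * x = 0}

/-- Left annihilator of an element as a set. -/
def lAnn (S : Type*) [Ring S] (a : S) : Set S := {x : S | x * a = 0}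

/-- Principal right ideal `bS`. -/
def rIdeal (S : Type*) [Ring S] (b : S) : Set S := {x : S | ∃ s : S, x = b * s}

/-- Principal left ideal `Sb`. -/
def lIdeal (S : Type*) [Ring S] (b : S) : Set S := {x : S | ∃ s : S, x = s * b}

/-- If `M` is image-projective and generates its kernels, `f ∈ End R M`, and `e` is an
idempotent endomorphism with `rann_S(f) = eS`, then `ker f = eM`. -/
theorem ker_eq_range_of_rann_eq_idem (R M : Type*) [Ring R] [AddCommGroup M] [Module R M]
    (himp : ImageProjective R M) (hgen : GeneratesKernels R M)
    (f e : Module.End R M) (he : e * e = e)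
    (hann : rAnn (Module.End R M) f = rIdeal (Module.End R M) e) :
    LinearMap.ker f = LinearMap.range e := by
  have key : ∀ γ : Module.End R M, f * γ = 0 ↔ LinearMap.range γ ≤ LinearMap.ker f := by
    intro γ
    constructor
    · intro h x hx
      obtain ⟨y, rfl⟩ := hx
      have := congrArg (fun g : Module.End R M => g y) h
      simpa [LinearMap.mem_ker] using this
    · intro h
      ext y
      exact h ⟨y, rfl⟩
  have hef : f * e = 0 := by
    have : e ∈ rIdeal (Module.End R M) e := ⟨1, by simp⟩
    rw [← hann] at this
    exact this
  apply le_antisymm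
  · rw [hgen f]
    apply iSup₂_le
    intro γ hγ
    have : γ ∈ rAnn (Module.End R M) f := (key γ).mpr hγ
    rw [hann] at this
    obtain ⟨s, rfl⟩ := this
    intro x hx
    obtain ⟨y, rfl⟩ := hx
    exact ⟨s y, rfl⟩
  · exact (key e).mp hef
end

section
/- Let R be a ring which is right centrally quasi-morphic. If the center Z(R) is von Neumann regular, then R is left centrally quasi-morphic. -/
/-- A ring is right centrally quasi-morphic. -/
def RightCentrallyQuasiMorphic (S : Type*) [Ring S] : Prop :=
  ∀ a : S, ∃ b c : S, b ∈ Set.center S ∧ c ∈ Set.center S ∧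
    rAnn S a = rIdeal S b ∧ rIdeal S a = rAnn S c

/-- A ring is left centrally quasi-morphic. -/
def LeftCentrallyQuasiMorphic (S : Type*) [Ring S] : Prop :=
  ∀ a : S, ∃ b c : S, b ∈ Set.center S ∧ c ∈ Set.center S ∧
    lAnn S a = lIdeal S b ∧ lIdeal S a = lAnn S c

/-- The center of a ring is von Neumann regular. -/
def CenterVNRegular (S : Type*) [Ring S] : Prop :=
  ∀ a ∈ Set.center S, ∃ b ∈ Set.center S, a = a * b * a
/-- A right centrally quasi-morphic ring with von Neumann regular center is
left centrally quasi-morphic. -/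
theorem leftCQM_of_rightCQM_of_centerVNR (R : Type*) [Ring R]
    (hR : RightCentrallyQuasiMorphic R) (hZ : CenterVNRegular R) :
    LeftCentrallyQuasiMorphic R := by
  intro a
  obtain ⟨b, c, hb, hc, hrann, hrid⟩ := hR a
  obtain ⟨g, hg, hbg⟩ := hZ b hb
  obtain ⟨e, he, hce⟩ := hZ c hc
  have ecomm : ∀ x : R, e * x = x * e := fun x => (Set.mem_center_iff.mp he).comm x
  have gcomm : ∀ x : R, g * x = x * g := fun x => (Set.mem_center_iff.mp hg).comm x
  have hfc : c * e ∈ Set.center R := Set.mul_mem_center hc he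
  have hhc : b * g ∈ Set.center R := Set.mul_mem_center hb hg
  -- basic identities
  have hab : a * b = 0 := by
    have : b ∈ rAnn R a := by rw [hrann]; exact ⟨1, (mul_one b).symm⟩
    simpa [rAnn] using this
  have hca : c * a = 0 := by
    have : a ∈ rAnn R c := by rw [← hrid]; exact ⟨1, (mul_one a).symm⟩
    simpa [rAnn] using this
  have hfa : (c * e) * a = 0 := by
    rw [mul_assoc, ecomm, ← mul_assoc, hca, zero_mul]
  have hah : a * (b * g) = 0 := by rw [← mul_assoc, hab, zero_mul]
  have hhb : (b * g) * b = b := hbg.symm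
  have hh2 : (b * g) * (b * g) = b * g := by rw [← mul_assoc, ← hbg]
  -- 1 - c*e ∈ aR
  have h1f : (1 : R) - c * e ∈ rAnn R c := by
    show c * (1 - c * e) = 0
    have : c * (c * e) = (c * e) * c := by
      rw [mul_assoc, ecomm c]
    rw [mul_sub, mul_one, this, ← hce, sub_self]
  rw [← hrid] at h1f
  obtain ⟨s, hs⟩ := h1f
  -- the key element t = (1 - b*g) * s
  have hat : a * ((1 - b * g) * s) = 1 - c * e := by
    rw [← mul_assoc, mul_sub, mul_one, hah, sub_zero, ← hs]
  have hta : (1 - b * g) * s * a = 1 - b * g := by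
    have key : ((1 - b * g) * s * a - (1 - b * g)) ∈ rAnn R a := by
      show a * ((1 - b * g) * s * a - (1 - b * g)) = 0
      rw [mul_sub, ← mul_assoc, hat, mul_sub, mul_one, hah, sub_zero, sub_mul, one_mul, hfa,
        sub_zero, sub_self]
    rw [hrann] at key
    obtain ⟨r, hr⟩ := key
    have h1 : (b * g) * ((1 - b * g) * s * a - (1 - b * g)) = 0 := by
      have e1 : (b * g) * ((1 - b * g) * s * a) = (((b * g) * (1 - b * g)) * s) * a := by
        noncomm_ring
      have e2 : (b * g) * (1 - b * g) = 0 := by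
        rw [mul_sub, mul_one, hh2, sub_self]
      rw [mul_sub, e1, e2, zero_mul, zero_mul, sub_self]
    rw [hr, ← mul_assoc, hhb] at h1
    have h2 : (1 - b * g) * s * a - (1 - b * g) = 0 := by rw [hr, h1]
    exact sub_eq_zero.mp h2
  refine ⟨c * e, b * g, hfc, hhc, ?_, ?_⟩
  · ext x
    constructor
    · intro hx
      have hx' : x * a = 0 := hx
      have hxf : x - x * (c * e) = 0 := by
        have : x * (1 - c * e) = 0 := by
          rw [hs, ← mul_assoc, hx', zero_mul]
        rwa [mul_sub, mul_one] at this
      exact ⟨x, (sub_eq_zero.mp hxf)⟩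
    · rintro ⟨r, rfl⟩
      show r * (c * e) * a = 0
      rw [mul_assoc, hfa, mul_zero]
  · ext x
    constructor
    · rintro ⟨r, rfl⟩
      show r * a * (b * g) = 0
      rw [mul_assoc, hah, mul_zero]
    · intro hx
      have hx' : x * (b * g) = 0 := hx
      have hx1 : x * (1 - b * g) = x := by
        rw [mul_sub, mul_one, hx', sub_zero]
      exact ⟨x * ((1 - b * g) * s), by rw [mul_assoc, hta, hx1]⟩
end

section
/- Let M be a right R-module with endomorphism ring S = End_R(M). If M is centrally quasi-morphic and image-projective, then S is right centrally quasi-morphic and M generates its kernels. -/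
/-- `M` is centrally quasi-morphic. -/
def CentrallyQuasiMorphicMod (R M : Type*) [Ring R] [AddCommGroup M] [Module R M] : Prop :=
  ∀ f : Module.End R M, ∃ g h : Module.End R M,
    g ∈ Set.center (Module.End R M) ∧ h ∈ Set.center (Module.End R M) ∧
    LinearMap.ker f = LinearMap.range g ∧ LinearMap.range f = LinearMap.ker h

/-- `M` is centrally morphic. -/
def CentrallyMorphicMod (R M : Type*) [Ring R] [AddCommGroup M] [Module R M] : Prop :=
  ∀ f : Module.End R M, ∃ g : Module.End R M,
    g ∈ Set.center (Module.End R M) ∧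
    LinearMap.ker f = LinearMap.range g ∧ LinearMap.range f = LinearMap.ker g

/-- A ring is right centrally morphic. -/
def RightCentrallyMorphic (S : Type*) [Ring S] : Prop :=
  ∀ a : S, ∃ b : S, b ∈ Set.center S ∧
    rAnn S a = rIdeal S b ∧ rIdeal S a = rAnn S b

/-- If `M` is centrally quasi-morphic and image-projective, then `End R M` is right
centrally quasi-morphic and `M` generates its kernels. -/
theorem endRing_rightCQM_of_CQM_imageProjective (R M : Type*)
    [Ring R] [AddCommGroup M] [Module R M]
    (hcqm : CentrallyQuasiMorphicMod R M) (himp : ImageProjective R M) :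
    RightCentrallyQuasiMorphic (Module.End R M) ∧ GeneratesKernels R M := by
  constructor
  · intro a
    obtain ⟨g, h, hg, hh, hker, hrange⟩ := hcqm a
    refine ⟨g, h, hg, hh, ?_, ?_⟩
    · ext x
      simp only [rAnn, rIdeal, Set.mem_setOf_eq]
      constructor
      · intro hx
        apply himp x g
        rw [← hker, LinearMap.range_le_ker_iff, ← Module.End.mul_eq_comp]
        exact hx
      · rintro ⟨s, rfl⟩
        have hag : a * g = 0 := by
          rw [Module.End.mul_eq_comp, ← LinearMap.range_le_ker_iff, hker]
        rw [← mul_assoc, hag, zero_mul]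
    · ext x
      simp only [rAnn, rIdeal, Set.mem_setOf_eq]
      constructor
      · rintro ⟨s, rfl⟩
        have hha : h * a = 0 := by
          rw [Module.End.mul_eq_comp, ← LinearMap.range_le_ker_iff, ← hrange]
        rw [← mul_assoc, hha, zero_mul]
      · intro hx
        apply himp x a
        rw [Module.End.mul_eq_comp, ← LinearMap.range_le_ker_iff, ← hrange] at hx
        exact hx
  · intro f
    obtain ⟨g, h, hg, hh, hker, hrange⟩ := hcqm f
    apply le_antisymm
    · have hmem : g ∈ {γ : Module.End R M | LinearMap.range γ ≤ LinearMap.ker f} := hker.ge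
      exact hker.le.trans (le_iSup₂ (f := fun γ _ => LinearMap.range γ) g hmem)
    · exact iSup₂_le fun γ hγ => hγ
end

section
/- Let M be a right R-module with endomorphism ring S = End_R(M). Suppose M is image-projective and generates its kernels. If S is right centrally quasi-morphic, then M is centrally quasi-morphic. -/
/-- If `M` is image-projective and generates its kernels, and `End R M` is right
centrally quasi-morphic, then `M` is centrally quasi-morphic. -/
theorem CQM_of_endRing_rightCQM (R M : Type*)
    [Ring R] [AddCommGroup M] [Module R M]
    (himp : ImageProjective R M) (hgen : GeneratesKernels R M)
    (hS : RightCentrallyQuasiMorphic (Module.End R M)) :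
    CentrallyQuasiMorphicMod R M := by
  intro f
  obtain ⟨b, c, hb, hc, h1, h2⟩ := hS f
  have mul_zero_iff : ∀ u v : Module.End R M, u * v = 0 ↔ LinearMap.range v ≤ LinearMap.ker u := by
    intro u v
    constructor
    · rintro h _ ⟨m, rfl⟩
      have : (u * v) m = 0 := by rw [h]; rfl
      exact this
    · intro h
      ext m
      exact h ⟨m, rfl⟩
  refine ⟨b, c, hb, hc, ?_, ?_⟩
  · apply le_antisymm
    · rw [hgen f]
      apply iSup₂_le
      intro γ hγ
      have : γ ∈ rAnn (Module.End R M) f := (mul_zero_iff f γ).mpr hγ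
      rw [h1] at this
      obtain ⟨s, rfl⟩ := this
      rintro _ ⟨m, rfl⟩
      exact ⟨s m, rfl⟩
    · have hbmem : b ∈ rIdeal (Module.End R M) b := ⟨1, (mul_one b).symm⟩
      rw [← h1] at hbmem
      exact (mul_zero_iff f b).mp hbmem
  · apply le_antisymm
    · have hfmem : f ∈ rIdeal (Module.End R M) f := ⟨1, (mul_one f).symm⟩
      rw [h2] at hfmem
      exact (mul_zero_iff c f).mp hfmem
    · rw [hgen c]
      apply iSup₂_le
      intro γ hγ
      have : γ ∈ rAnn (Module.End R M) c := (mul_zero_iff c γ).mpr hγ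
      rw [← h2] at this
      obtain ⟨s, rfl⟩ := this
      rintro _ ⟨m, rfl⟩
      exact ⟨s m, rfl⟩
end

section
/- Let M be a right R-module with endomorphism ring S = End_R(M). Suppose M is image-projective and generates its kernels. If S is right centrally morphic, then M is centrally morphic. -/
/-- If `M` is image-projective and generates its kernels, and `End R M` is right
centrally morphic, then `M` is centrally morphic. -/
theorem CM_of_endRing_rightCM (R M : Type*)
    [Ring R] [AddCommGroup M] [Module R M]
    (himp : ImageProjective R M) (hgen : GeneratesKernels R M)
    (hS : RightCentrallyMorphic (Module.End R M)) :
    CentrallyMorphicMod R M := by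
  intro f
  obtain ⟨b, hbc, h1, h2⟩ := hS f
  have key : ∀ (u v : Module.End R M), u * v = 0 ↔ LinearMap.range v ≤ LinearMap.ker u := by
    intro u v
    constructor
    · intro h x hx
      obtain ⟨y, rfl⟩ := hx
      have : (u * v) y = 0 := by rw [h]; rfl
      exact this
    · intro h
      ext y
      exact h ⟨y, rfl⟩
  refine ⟨b, hbc, le_antisymm ?_ ?_, le_antisymm ?_ ?_⟩
  · rw [hgen f]
    refine iSup₂_le fun γ hγ => ?_
    have : γ ∈ rAnn (Module.End R M) f := (key f γ).2 hγ
    rw [h1] at this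
    obtain ⟨s, rfl⟩ := this
    intro x hx
    obtain ⟨y, rfl⟩ := hx
    exact ⟨s y, rfl⟩
  · have : b ∈ rAnn (Module.End R M) f := by rw [h1]; exact ⟨1, (mul_one b).symm⟩
    exact (key f b).1 this
  · have : f ∈ rAnn (Module.End R M) b := by rw [← h2]; exact ⟨1, (mul_one f).symm⟩
    exact (key b f).1 this
  · rw [hgen b]
    refine iSup₂_le fun γ hγ => ?_
    have : γ ∈ rAnn (Module.End R M) b := (key b γ).2 hγ
    rw [← h2] at this
    obtain ⟨s, rfl⟩ := this
    intro x hx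
    obtain ⟨y, rfl⟩ := hx
    exact ⟨s y, rfl⟩
end

section
/- Let M be a right R-module with endomorphism ring S = End_R(M). Suppose M is image-projective and generates its kernels. Then the following are equivalent: (a) M is centrally morphic; (b) M is centrally quasi-morphic; (c) S is right centrally morphic. -/
section CMAux

variable {R M : Type*} [Ring R] [AddCommGroup M] [Module R M]

private lemma endMul_eq_zero_iff (f g : Module.End R M) :
    f * g = 0 ↔ LinearMap.range g ≤ LinearMap.ker f := by
  rw [Module.End.mul_eq_comp, ← LinearMap.range_le_ker_iff]

private lemma cqm_to_rcm (himp : ImageProjective R M)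
    (hcqm : CentrallyQuasiMorphicMod R M) :
    RightCentrallyMorphic (Module.End R M) := by
  intro a
  obtain ⟨g, h, hgc, hhc, hker, hran⟩ := hcqm a
  have hgcomm : ∀ x, g * x = x * g := fun x => (Set.mem_center_iff.mp hgc).comm x
  have hhcomm : ∀ x, h * x = x * h := fun x => (Set.mem_center_iff.mp hhc).comm x
  have hag : a * g = 0 := (endMul_eq_zero_iff a g).mpr (le_of_eq hker.symm)
  have hha : h * a = 0 := (endMul_eq_zero_iff h a).mpr (le_of_eq hran)
  have hahz : a * h = 0 := by rw [← hhcomm a]; exact hha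
  have hrange : LinearMap.range h ≤ LinearMap.range g := by
    rw [← hker]; exact (endMul_eq_zero_iff a h).mp hahz
  obtain ⟨s, hs⟩ := himp h g hrange
  refine ⟨g, hgc, ?_, ?_⟩
  · ext x
    simp only [rAnn, rIdeal, Set.mem_setOf_eq]
    constructor
    · intro hx
      have : LinearMap.range x ≤ LinearMap.range g := by
        rw [← hker]; exact (endMul_eq_zero_iff a x).mp hx
      exact himp x g this
    · rintro ⟨t, rfl⟩
      rw [← mul_assoc, hag, zero_mul]
  · ext x
    simp only [rAnn, rIdeal, Set.mem_setOf_eq]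
    constructor
    · rintro ⟨t, rfl⟩
      rw [← mul_assoc, hgcomm a, hag, zero_mul]
    · intro hx
      have hhx : h * x = 0 := by
        rw [hs, hgcomm s, mul_assoc, hx, mul_zero]
      have : LinearMap.range x ≤ LinearMap.range a := by
        rw [hran]; exact (endMul_eq_zero_iff h x).mp hhx
      exact himp x a this

private lemma rcm_to_cm (hgen : GeneratesKernels R M)
    (hrcm : RightCentrallyMorphic (Module.End R M)) :
    CentrallyMorphicMod R M := by
  intro f
  obtain ⟨b, hbc, hann, hid⟩ := hrcm f
  have hmemAnn : ∀ x : Module.End R M, f * x = 0 ↔ ∃ s, x = b * s := fun x =>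
    Set.ext_iff.mp hann x
  have hmemId : ∀ x : Module.End R M, (∃ s, x = f * s) ↔ b * x = 0 := fun x =>
    Set.ext_iff.mp hid x
  refine ⟨b, hbc, ?_, ?_⟩
  · apply le_antisymm
    · rw [hgen f]
      refine iSup₂_le fun γ hγ => ?_
      have : f * γ = 0 := (endMul_eq_zero_iff f γ).mpr hγ
      obtain ⟨s, rfl⟩ := (hmemAnn γ).mp this
      rw [Module.End.mul_eq_comp]
      exact LinearMap.range_comp_le_range _ _
    · have : f * b = 0 := (hmemAnn b).mpr ⟨1, (mul_one b).symm⟩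
      exact (endMul_eq_zero_iff f b).mp this
  · apply le_antisymm
    · have : b * f = 0 := (hmemId f).mp ⟨1, (mul_one f).symm⟩
      exact (endMul_eq_zero_iff b f).mp this
    · rw [hgen b]
      refine iSup₂_le fun γ hγ => ?_
      have : b * γ = 0 := (endMul_eq_zero_iff b γ).mpr hγ
      obtain ⟨s, rfl⟩ := (hmemId γ).mpr this
      rw [Module.End.mul_eq_comp]
      exact LinearMap.range_comp_le_range _ _

end CMAux

/-- If `M` is image-projective and generates its kernels, then `M` is centrally morphic
iff `M` is centrally quasi-morphic iff `End R M` is right centrally morphic. -/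
theorem CM_iff_CQM_iff_endRing_rightCM (R M : Type*)
    [Ring R] [AddCommGroup M] [Module R M]
    (himp : ImageProjective R M) (hgen : GeneratesKernels R M) :
    (CentrallyMorphicMod R M ↔ CentrallyQuasiMorphicMod R M) ∧
    (CentrallyQuasiMorphicMod R M ↔ RightCentrallyMorphic (Module.End R M)) := by
  have cm_to_cqm : CentrallyMorphicMod R M → CentrallyQuasiMorphicMod R M := by
    intro hcm f
    obtain ⟨g, hgc, h1, h2⟩ := hcm f
    exact ⟨g, g, hgc, hgc, h1, h2⟩
  refine ⟨⟨cm_to_cqm, fun hcqm => rcm_to_cm hgen (cqm_to_rcm himp hcqm)⟩,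
    ⟨fun hcqm => cqm_to_rcm himp hcqm,
     fun hrcm => cm_to_cqm (rcm_to_cm hgen hrcm)⟩⟩
end

section
/- Let M be a semisimple artinian right R-module (i.e., M is semisimple and artinian) and set S = End_R(M). Then the following are equivalent: (1) M is centrally quasi-morphic; (2) M is centrally morphic; (3) S is right centrally morphic. -/
section Aux

open LinearMap Submodule

variable {R M : Type*} [Ring R] [AddCommGroup M] [Module R M]

/-- The projection onto `p` along `q`, as an endomorphism of `M`. -/
noncomputable def projEnd (p q : Submodule R M) (h : IsCompl p q) : Module.End R M :=
  p.subtype ∘ₗ Submodule.linearProjOfIsCompl p q h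

lemma projEnd_mem (p q : Submodule R M) (h : IsCompl p q) (m : M) :
    projEnd p q h m ∈ p := (Submodule.linearProjOfIsCompl p q h m).2

lemma projEnd_left (p q : Submodule R M) (h : IsCompl p q) {x : M} (hx : x ∈ p) :
    projEnd p q h x = x := by
  have := Submodule.linearProjOfIsCompl_apply_left h ⟨x, hx⟩
  show ((Submodule.linearProjOfIsCompl p q h x : p) : M) = x
  exact congrArg Subtype.val this

lemma projEnd_right (p q : Submodule R M) (h : IsCompl p q) {x : M} (hx : x ∈ q) :
    projEnd p q h x = 0 := by
  have := (Submodule.projectionOnto_apply_eq_zero_iff h).mpr hx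
  change ((Submodule.projectionOnto p q h x : p) : M) = 0
  simp [this]

/-- The restriction of `c` to a complement of its kernel, as an equivalence onto its range. -/
noncomputable def restrEquiv (c : Module.End R M) (p : Submodule R M)
    (h1 : Disjoint p (LinearMap.ker c)) (h2 : Codisjoint p (LinearMap.ker c)) :
    p ≃ₗ[R] LinearMap.range c :=
  LinearEquiv.ofBijective
    (LinearMap.codRestrict (LinearMap.range c) (c ∘ₗ p.subtype)
      (fun n => LinearMap.mem_range_self c (n : M)))
    ⟨by
      intro a b hab
      have hval : c (a : M) = c (b : M) := congrArg Subtype.val hab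
      have hker : (a : M) - (b : M) ∈ LinearMap.ker c := by
        rw [LinearMap.mem_ker, map_sub, hval, sub_self]
      have hmem : (a : M) - (b : M) ∈ p := sub_mem a.2 b.2
      have hz : (a : M) - (b : M) = 0 := by
        have := h1.le_bot (⟨hmem, hker⟩ : (a : M) - (b : M) ∈ p ⊓ LinearMap.ker c)
        simpa using this
      exact Subtype.ext (sub_eq_zero.mp hz),
      by
      rintro ⟨y, m, rfl⟩
      obtain ⟨n, k, hn, hk, hsum⟩ := Submodule.codisjoint_iff_exists_add_eq.mp h2 m
      refine ⟨⟨n, hn⟩, Subtype.ext ?_⟩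
      have : c k = 0 := hk
      simp only [LinearMap.codRestrict_apply, LinearMap.coe_comp, Function.comp_apply,
        Submodule.coe_subtype]
      rw [← hsum, map_add, this, add_zero]
      rfl⟩

lemma restrEquiv_apply (c : Module.End R M) (p : Submodule R M)
    (h1 : Disjoint p (LinearMap.ker c)) (h2 : Codisjoint p (LinearMap.ker c)) (n : p) :
    ((restrEquiv c p h1 h2 n : LinearMap.range c) : M) = c n := rfl

/-- Semisimple modules are image-projective: a lifting lemma. -/
lemma lift_through [IsSemisimpleModule R M] (f g : Module.End R M)
    (hfg : LinearMap.range f ≤ LinearMap.range g) :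
    ∃ s : Module.End R M, f = g * s := by
  obtain ⟨p, hp⟩ := exists_isCompl (LinearMap.ker g)
  have h1 : Disjoint p (LinearMap.ker g) := hp.symm.disjoint
  have h2 : Codisjoint p (LinearMap.ker g) := hp.symm.codisjoint
  let φ := restrEquiv g p h1 h2
  refine ⟨p.subtype ∘ₗ (φ.symm : LinearMap.range g →ₗ[R] p) ∘ₗ
      LinearMap.codRestrict (LinearMap.range g) f
        (fun m => hfg (LinearMap.mem_range_self f m)), ?_⟩
  ext m
  have key := φ.apply_symm_apply ⟨f m, hfg (LinearMap.mem_range_self f m)⟩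
  have := congrArg Subtype.val key
  rw [restrEquiv_apply] at this
  exact this.symm

variable [IsSemisimpleModule R M]

lemma central_disjoint (c : Module.End R M) (hc : ∀ s, s * c = c * s) :
    Disjoint (LinearMap.ker c) (LinearMap.range c) := by
  obtain ⟨q, hq⟩ := exists_isCompl (LinearMap.range c)
  have hrange : LinearMap.range (projEnd (LinearMap.range c) q hq) ≤ LinearMap.range c := by
    rintro x ⟨m, rfl⟩
    exact projEnd_mem _ _ _ m
  obtain ⟨s, hs⟩ := lift_through (projEnd (LinearMap.range c) q hq) c hrange
  rw [Submodule.disjoint_def]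
  intro x hxk hxr
  have h1 : projEnd (LinearMap.range c) q hq x = x := projEnd_left _ _ _ hxr
  have h2 : projEnd (LinearMap.range c) q hq x = s (c x) := by
    rw [hs, ← hc s]; rfl
  rw [h2, (LinearMap.mem_ker.mp hxk), map_zero] at h1
  exact h1.symm

lemma central_codisjoint (c : Module.End R M) (hc : ∀ s, s * c = c * s) :
    Codisjoint (LinearMap.ker c) (LinearMap.range c) := by
  set K := LinearMap.ker c ⊔ LinearMap.range c with hK
  obtain ⟨P, hP⟩ := exists_isCompl K
  set π := projEnd P K hP.symm with hπ
  have hidem : ∀ x, π (π x) = π x := fun x => projEnd_left _ _ _ (projEnd_mem _ _ _ x)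
  have hzero : ∀ m, c (π m) = 0 := by
    intro m
    have hcomm : c (π m) = π (c m) := by
      have := congrArg (fun u => u m) (hc π)
      simpa [Module.End.mul_apply] using this.symm
    have h1 : π (c (π m)) = 0 := by
      apply projEnd_right
      exact le_sup_right (a := LinearMap.ker c) (LinearMap.mem_range_self c (π m))
    have h2 : π (c (π m)) = c (π m) := by
      rw [hcomm, hidem, ← hcomm]
    rw [h2] at h1
    exact h1
  have hP0 : P = ⊥ := by
    rw [eq_bot_iff]
    intro x hx
    have hcx : c x = 0 := by
      have := hzero x
      rwa [projEnd_left _ _ _ hx] at this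
    have hxK : x ∈ K := le_sup_left (b := LinearMap.range c) (LinearMap.mem_ker.mpr hcx)
    exact hP.disjoint.le_bot ⟨hxK, hx⟩
  have hKtop : K = ⊤ := by
    have := codisjoint_iff.mp hP.codisjoint
    rwa [hP0, sup_bot_eq] at this
  exact codisjoint_iff.mpr hKtop

/-- For a central endomorphism `c` of a semisimple module, there is a central projection
onto `ker c` along `range c`. -/
lemma exists_central_proj (c : Module.End R M) (hc : ∀ s, s * c = c * s) :
    ∃ e : Module.End R M, (∀ s, s * e = e * s) ∧ (∀ m, e m ∈ LinearMap.ker c) ∧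
      (∀ x ∈ LinearMap.ker c, e x = x) ∧ (∀ x ∈ LinearMap.range c, e x = 0) := by
  have hcompl : IsCompl (LinearMap.ker c) (LinearMap.range c) :=
    ⟨central_disjoint c hc, central_codisjoint c hc⟩
  refine ⟨projEnd _ _ hcompl, ?_, fun m => projEnd_mem _ _ _ m,
    fun x hx => projEnd_left _ _ _ hx, fun x hx => projEnd_right _ _ _ hx⟩
  intro s
  ext m
  obtain ⟨a, b, ha, hb, rfl⟩ := Submodule.codisjoint_iff_exists_add_eq.mp hcompl.codisjoint m
  have hsa : s a ∈ LinearMap.ker c := by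
    rw [LinearMap.mem_ker]
    have := congrArg (fun u => u a) (hc s)
    simp only [Module.End.mul_apply] at this
    rw [← this, LinearMap.mem_ker.mp ha, map_zero]
  have hsb : s b ∈ LinearMap.range c := by
    obtain ⟨m', rfl⟩ := hb
    have := congrArg (fun u => u m') (hc s)
    simp only [Module.End.mul_apply] at this
    exact ⟨s m', this.symm⟩
  simp only [Module.End.mul_apply, map_add]
  rw [projEnd_left _ _ _ ha, projEnd_right _ _ _ hb, map_zero,
    projEnd_left _ _ _ hsa, projEnd_right _ _ _ hsb]

end Aux



/-- For a semisimple artinian module `M`, `M` is centrally quasi-morphic iff `M` is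
centrally morphic iff `End R M` is right centrally morphic. -/
theorem semisimple_artinian_CQM_iff_CM_iff_endRing_rightCM (R M : Type*)
    [Ring R] [AddCommGroup M] [Module R M] [IsSemisimpleModule R M] [IsArtinian R M] :
    (CentrallyQuasiMorphicMod R M ↔ CentrallyMorphicMod R M) ∧
    (CentrallyMorphicMod R M ↔ RightCentrallyMorphic (Module.End R M)) := by
  constructor
  · constructor
    · -- CQM → CM
      intro hcqm f
      obtain ⟨g, h, hg, hh, hkf, hrf⟩ := hcqm f
      have hgc : ∀ s, s * g = g * s := fun s => Semigroup.mem_center_iff.mp hg s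
      have hhc : ∀ s, s * h = h * s := fun s => Semigroup.mem_center_iff.mp hh s
      obtain ⟨e, hec, hek, hel, her⟩ := exists_central_proj g hgc
      obtain ⟨e', he'c, he'k, he'l, he'r⟩ := exists_central_proj h hhc
      have hdisj := central_disjoint g hgc
      -- Claim A : e ∘ e' = e
      have claimA : ∀ m, e (e' m) = e m := by
        intro m
        have h1 : f (e (e' m)) = f (e m) := by
          have hcomm := congrArg (fun u => u m) (he'c (f * e))
          simp only [Module.End.mul_apply] at hcomm
          -- hcomm : f (e (e' m)) = e' (f (e m))
          have hfix : e' (f (e m)) = f (e m) :=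
            he'l _ (hrf ▸ LinearMap.mem_range_self f (e m))
          rw [hcomm, hfix]
        have h2 : e (e' m) - e m ∈ LinearMap.ker g := sub_mem (hek _) (hek _)
        have h3 : e (e' m) - e m ∈ LinearMap.range g := by
          rw [← hkf, LinearMap.mem_ker, map_sub, h1, sub_self]
        have := hdisj.le_bot ⟨h2, h3⟩
        rw [Submodule.mem_bot] at this
        exact sub_eq_zero.mp this
      -- Claim B : e' ∘ e = e'
      have claimB : ∀ m, e' (e m) = e' m := by
        have hd : Disjoint (LinearMap.ker g) (LinearMap.ker f) := by
          rw [hkf]; exact hdisj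
        have hcd : Codisjoint (LinearMap.ker g) (LinearMap.ker f) := by
          rw [hkf]; exact central_codisjoint g hgc
        set φ := restrEquiv f (LinearMap.ker g) hd hcd with hφ
        set t : Module.End R M := (LinearMap.ker g).subtype ∘ₗ
          (φ.symm : LinearMap.range f →ₗ[R] LinearMap.ker g) ∘ₗ
          LinearMap.codRestrict (LinearMap.range f) e'
            (fun m => hrf ▸ he'k m) with ht
        intro m
        have htc := congrArg (fun u => u m) (hec t)
        simp only [Module.End.mul_apply] at htc
        -- htc : t (e m) = e (t m)
        have hfixt : e (t m) = t m := hel _ (φ.symm _).2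
        rw [hfixt] at htc
        -- htc : t (e m) = t m, i.e. ↑(φ.symm ⟨e' (e m), _⟩) = ↑(φ.symm ⟨e' m, _⟩)
        have hval : (φ.symm ⟨e' (e m), hrf ▸ he'k (e m)⟩ : M) =
            (φ.symm ⟨e' m, hrf ▸ he'k m⟩ : M) := htc
        have heq := φ.symm.injective (Subtype.ext (congrArg Subtype.val
          (Subtype.coe_injective hval)))
        exact congrArg Subtype.val heq
      have hcomm : ∀ m, e' (e m) = e (e' m) := by
        intro m
        have := congrArg (fun u => u m) (hec e')
        simpa [Module.End.mul_apply] using this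
      have hker : LinearMap.ker g = LinearMap.ker h := by
        ext x
        constructor
        · intro hx
          have hx' : e x = x := hel x hx
          have : x = e' (e x) := by
            rw [hcomm, claimA, hx']
          rw [this]
          exact he'k (e x)
        · intro hx
          have hx' : e' x = x := he'l x hx
          have : x = e (e' x) := by
            rw [← hcomm, claimB, hx']
          rw [this]
          exact hek (e' x)
      exact ⟨g, hg, hkf, by rw [hrf, hker]⟩
    · -- CM → CQM
      intro hcm f
      obtain ⟨g, hg, h1, h2⟩ := hcm f
      exact ⟨g, g, hg, hg, h1, h2⟩
  · constructor
    · -- CM → ring RCM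
      intro hcm a
      obtain ⟨g, hg, hk, hr⟩ := hcm a
      refine ⟨g, hg, ?_, ?_⟩
      · ext x
        simp only [rAnn, rIdeal, Set.mem_setOf_eq]
        constructor
        · intro hax
          have hx : LinearMap.range x ≤ LinearMap.range g := by
            rw [← hk]
            rintro y ⟨m, rfl⟩
            rw [LinearMap.mem_ker]
            have := congrArg (fun u => u m) hax
            simpa [Module.End.mul_apply] using this
          exact lift_through x g hx
        · rintro ⟨s, rfl⟩
          ext m
          have : g (s m) ∈ LinearMap.ker a := by
            rw [hk]; exact LinearMap.mem_range_self g (s m)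
          simpa [Module.End.mul_apply] using this
      · ext x
        simp only [rAnn, rIdeal, Set.mem_setOf_eq]
        constructor
        · rintro ⟨s, rfl⟩
          ext m
          have : a (s m) ∈ LinearMap.ker g := by
            rw [← hr]; exact LinearMap.mem_range_self a (s m)
          simpa [Module.End.mul_apply] using this
        · intro hgx
          have hx : LinearMap.range x ≤ LinearMap.range a := by
            rw [hr]
            rintro y ⟨m, rfl⟩
            rw [LinearMap.mem_ker]
            have := congrArg (fun u => u m) hgx
            simpa [Module.End.mul_apply] using this
          exact lift_through x a hx
    · -- ring RCM → CM
      intro hrcm f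
      obtain ⟨b, hb, h1, h2⟩ := hrcm f
      refine ⟨b, hb, ?_, ?_⟩
      · -- ker f = range b
        ext x
        constructor
        · intro hx
          set C := Submodule.span R {x} with hC
          have hCk : C ≤ LinearMap.ker f := by
            rw [hC, Submodule.span_le, Set.singleton_subset_iff]
            exact hx
          obtain ⟨C', hC'⟩ := exists_isCompl C
          set s := projEnd C C' hC' with hs
          have hfs : s ∈ rAnn (Module.End R M) f := by
            show f * s = 0
            ext m
            have : s m ∈ LinearMap.ker f := hCk (projEnd_mem _ _ _ m)
            simpa [Module.End.mul_apply] using this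
          rw [h1] at hfs
          obtain ⟨t, ht⟩ := hfs
          have hxC : x ∈ C := Submodule.mem_span_singleton_self x
          have : x = b (t x) := by
            have h0 : s x = x := projEnd_left _ _ _ hxC
            have := congrArg (fun u => u x) ht
            simp only [Module.End.mul_apply] at this
            rw [h0] at this
            exact this
          exact ⟨t x, this.symm⟩
        · rintro ⟨m, rfl⟩
          rw [LinearMap.mem_ker]
          have hbId : b ∈ rIdeal (Module.End R M) b := ⟨1, (mul_one b).symm⟩
          rw [← h1] at hbId
          have := congrArg (fun u => u m) hbId
          simpa [Module.End.mul_apply] using this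
      · -- range f = ker b
        ext x
        constructor
        · rintro ⟨m, rfl⟩
          rw [LinearMap.mem_ker]
          have hfId : f ∈ rIdeal (Module.End R M) f := ⟨1, (mul_one f).symm⟩
          rw [h2] at hfId
          have := congrArg (fun u => u m) hfId
          simpa [Module.End.mul_apply] using this
        · intro hx
          set C := Submodule.span R {x} with hC
          have hCk : C ≤ LinearMap.ker b := by
            rw [hC, Submodule.span_le, Set.singleton_subset_iff]
            exact hx
          obtain ⟨C', hC'⟩ := exists_isCompl C
          set s := projEnd C C' hC' with hs
          have hbs : s ∈ rAnn (Module.End R M) b := by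
            show b * s = 0
            ext m
            have : s m ∈ LinearMap.ker b := hCk (projEnd_mem _ _ _ m)
            simpa [Module.End.mul_apply] using this
          rw [← h2] at hbs
          obtain ⟨t, ht⟩ := hbs
          have hxC : x ∈ C := Submodule.mem_span_singleton_self x
          have : x = f (t x) := by
            have h0 : s x = x := projEnd_left _ _ _ hxC
            have := congrArg (fun u => u x) ht
            simp only [Module.End.mul_apply] at this
            rw [h0] at this
            exact this
          exact ⟨t x, this.symm⟩
end

section
/- Let M be a projective right R-module and S = End_R(M). Then M is centrally morphic if and only if M is centrally quasi-morphic and S is right centrally morphic. -/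
section Aux

variable {R M : Type*} [Ring R] [AddCommGroup M] [Module R M]

lemma end_mul_eq_zero_iff {a x : Module.End R M} :
    a * x = 0 ↔ LinearMap.range x ≤ LinearMap.ker a := by
  constructor
  · rintro h m ⟨n, rfl⟩
    have := congrFun (congrArg DFunLike.coe h) n
    simpa using this
  · intro h
    ext n
    simpa using h ⟨n, rfl⟩

lemma range_mul_le_left (a s : Module.End R M) :
    LinearMap.range (a * s) ≤ LinearMap.range a := by
  rintro m ⟨n, rfl⟩
  exact ⟨s n, rfl⟩

lemma imageProjective_of_projective [Module.Projective R M] : ImageProjective R M := by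
  intro f g hle
  obtain ⟨s, hs⟩ := Module.projective_lifting_property g.rangeRestrict
    (f.codRestrict (LinearMap.range g) (fun m => hle ⟨m, rfl⟩)) g.surjective_rangeRestrict
  refine ⟨s, ?_⟩
  ext m
  have h := congrFun (congrArg DFunLike.coe hs) m
  have h2 : g (s m) = f m := congrArg Subtype.val h
  simpa [Module.End.mul_apply] using h2.symm

end Aux

/-- A projective module `M` is centrally morphic iff `M` is centrally quasi-morphic
and `End R M` is right centrally morphic. -/
theorem projective_CM_iff_CQM_and_endRing_rightCM (R M : Type*)
    [Ring R] [AddCommGroup M] [Module R M] [Module.Projective R M] :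
    CentrallyMorphicMod R M ↔
      (CentrallyQuasiMorphicMod R M ∧ RightCentrallyMorphic (Module.End R M)) := by
  classical
  constructor
  · intro hCM
    refine ⟨fun f => ?_, fun a => ?_⟩
    · obtain ⟨g, hg, h1, h2⟩ := hCM f
      exact ⟨g, g, hg, hg, h1, h2⟩
    · obtain ⟨g, hg, h1, h2⟩ := hCM a
      refine ⟨g, hg, ?_, ?_⟩
      · ext x
        simp only [rAnn, rIdeal, Set.mem_setOf_eq]
        constructor
        · intro hx
          obtain ⟨s, hs⟩ := imageProjective_of_projective x g
            ((end_mul_eq_zero_iff.1 hx).trans h1.le)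
          exact ⟨s, hs⟩
        · rintro ⟨s, rfl⟩
          exact end_mul_eq_zero_iff.2 ((range_mul_le_left g s).trans h1.ge)
      · ext x
        simp only [rIdeal, rAnn, Set.mem_setOf_eq]
        constructor
        · rintro ⟨s, rfl⟩
          exact end_mul_eq_zero_iff.2 ((range_mul_le_left a s).trans h2.le)
        · intro hx
          obtain ⟨s, hs⟩ := imageProjective_of_projective x a
            ((end_mul_eq_zero_iff.1 hx).trans h2.ge)
          exact ⟨s, hs⟩
  · rintro ⟨hQM, hRCM⟩ f
    obtain ⟨b, hb, hb1, hb2⟩ := hRCM f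
    refine ⟨b, hb, ?_, ?_⟩
    · apply le_antisymm
      · obtain ⟨g, h, hg, hh, hg1, hh1⟩ := hQM f
        have hgmem : g ∈ rAnn (Module.End R M) f := end_mul_eq_zero_iff.2 hg1.ge
        rw [hb1] at hgmem
        obtain ⟨s, hs⟩ := hgmem
        rw [hg1, hs]
        exact range_mul_le_left b s
      · have hbmem : b ∈ rAnn (Module.End R M) f := by
          rw [hb1]; exact ⟨1, (mul_one b).symm⟩
        exact end_mul_eq_zero_iff.1 hbmem
    · apply le_antisymm
      · have hfmem : f ∈ rAnn (Module.End R M) b := by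
          rw [← hb2]; exact ⟨1, (mul_one f).symm⟩
        exact end_mul_eq_zero_iff.1 hfmem
      · obtain ⟨g', h', hg', hh', hg'1, hh'1⟩ := hQM b
        have hmem : g' ∈ rIdeal (Module.End R M) f := by
          rw [hb2]; exact end_mul_eq_zero_iff.2 hg'1.ge
        obtain ⟨s, hs⟩ := hmem
        rw [hg'1, hs]
        exact range_mul_le_left f s
end

section
/- Let R be a semiprime, right centrally quasi-morphic ring whose center Z(R) is von Neumann regular. Then R is strongly π-regular: for every a ∈ R there exist n ≥ 1 and r, u ∈ R with a^n = a^{n+1}·r and a^n = u·a^{n+1}. -/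
/-- A ring is strongly π-regular. -/
def StronglyPiRegular (S : Type*) [Ring S] : Prop :=
  ∀ a : S, ∃ n : ℕ, 1 ≤ n ∧ ∃ r u : S, a ^ n = a ^ (n + 1) * r ∧ a ^ n = u * a ^ (n + 1)

/-- A ring is semiprime: every two-sided ideal squaring to zero is zero. -/
def SemiprimeRing (S : Type*) [Ring S] : Prop :=
  ∀ I : TwoSidedIdeal S, (∀ x ∈ I, ∀ y ∈ I, x * y = 0) → ∀ x ∈ I, x = 0

/-- A semiprime right centrally quasi-morphic ring is reduced. -/
lemma reduced_of_semiprime_rightCQM (R : Type*) [Ring R]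
    (hsp : SemiprimeRing R) (hcqm : RightCentrallyQuasiMorphic R) :
    ∀ a : R, a * a = 0 → a = 0 := by
  intro a ha
  obtain ⟨b, c, hb, hc, hrann, -⟩ := hcqm a
  -- a ∈ rAnn a = bR
  have haR : a ∈ rIdeal R b := hrann ▸ (ha : a ∈ rAnn R a)
  obtain ⟨t, ht⟩ := haR
  have hab : a * b = 0 := by
    have : b ∈ rAnn R a := hrann ▸ ⟨1, (mul_one b).symm⟩
    exact this
  have hbcomm : ∀ g : R, g * b = b * g := fun g => ((Set.mem_center_iff.mp hb).comm g).symm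
  have key : ∀ r : R, a * r * a = 0 := by
    intro r
    have h1 : a * r * b = 0 := by
      rw [mul_assoc]
      rw [show r * b = b * r from (hbcomm r)]
      rw [← mul_assoc, hab, zero_mul]
    calc a * r * a = a * r * (b * t) := by rw [← ht]
      _ = a * r * b * t := by noncomm_ring
      _ = 0 := by rw [h1, zero_mul]
  -- the two-sided ideal generated by a
  set G : Set R := {x | ∃ r s : R, x = r * a * s} with hG
  set C : AddSubgroup R := AddSubgroup.closure G with hC
  have gmem : ∀ {r s : R}, r * a * s ∈ C := fun {r s} =>
    AddSubgroup.subset_closure ⟨r, s, rfl⟩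
  have hml : ∀ {x y : R}, y ∈ C → x * y ∈ C := by
    intro x y hy
    induction hy using AddSubgroup.closure_induction with
    | mem z hz =>
      obtain ⟨r, s, rfl⟩ := hz
      have : x * (r * a * s) = (x * r) * a * s := by noncomm_ring
      rw [this]; exact gmem
    | zero => simpa using C.zero_mem
    | add p q hp hq ihp ihq => rw [mul_add]; exact C.add_mem ihp ihq
    | neg p hp ihp => rw [mul_neg]; exact C.neg_mem ihp
  have hmr : ∀ {x y : R}, x ∈ C → x * y ∈ C := by
    intro x y hx
    induction hx using AddSubgroup.closure_induction with
    | mem z hz =>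
      obtain ⟨r, s, rfl⟩ := hz
      have : (r * a * s) * y = r * a * (s * y) := by noncomm_ring
      rw [this]; exact gmem
    | zero => simpa using C.zero_mem
    | add p q hp hq ihp ihq => rw [add_mul]; exact C.add_mem ihp ihq
    | neg p hp ihp => rw [neg_mul]; exact C.neg_mem ihp
  let I : TwoSidedIdeal R := TwoSidedIdeal.mk' (C : Set R) C.zero_mem
    (fun hx hy => C.add_mem hx hy) (fun hx => C.neg_mem hx) hml hmr
  have memI : ∀ x : R, x ∈ I ↔ x ∈ C := fun x =>
    TwoSidedIdeal.mem_mk' _ _ _ _ _ _ x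
  -- a * s * y = 0 for all y in C
  have haux : ∀ y ∈ C, ∀ s : R, a * s * y = 0 := by
    intro y hy
    induction hy using AddSubgroup.closure_induction with
    | mem z hz =>
      intro s
      obtain ⟨r', s', rfl⟩ := hz
      have : a * s * (r' * a * s') = (a * (s * r') * a) * s' := by noncomm_ring
      rw [this, key, zero_mul]
    | zero => intro s; simp
    | add p q hp hq ihp ihq => intro s; rw [mul_add, ihp, ihq, add_zero]
    | neg p hp ihp => intro s; rw [mul_neg, ihp, neg_zero]
  have hprod : ∀ x ∈ I, ∀ y ∈ I, x * y = 0 := by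
    intro x hx y hy
    rw [memI] at hx hy
    induction hx using AddSubgroup.closure_induction with
    | mem z hz =>
      obtain ⟨r, s, rfl⟩ := hz
      have : (r * a * s) * y = r * (a * s * y) := by noncomm_ring
      rw [this, haux y hy, mul_zero]
    | zero => simp
    | add p q hp hq ihp ihq => rw [add_mul, ihp, ihq, add_zero]
    | neg p hp ihp => rw [neg_mul, ihp, neg_zero]
  have haI : a ∈ I := (memI a).mpr (by simpa using gmem (r := 1) (s := 1))
  exact hsp I hprod a haI

/-- In a reduced ring, idempotents are central. -/
lemma idem_central_of_reduced (R : Type*) [Ring R]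
    (hred : ∀ a : R, a * a = 0 → a = 0) (f : R) (hf : f * f = f) :
    ∀ x : R, f * x = x * f := by
  intro x
  have h1 : f * x = f * x * f := by
    have hz : (f * x - f * x * f) * f = 0 := by
      rw [sub_mul, mul_assoc (f * x) f f, hf, sub_self]
    have hsq : (f * x - f * x * f) * (f * x - f * x * f) = 0 := by
      have e1 : (f * x - f * x * f) * (f * x - f * x * f)
          = ((f * x - f * x * f) * f) * x - ((f * x - f * x * f) * f) * (x * f) := by noncomm_ring
      rw [e1, hz, zero_mul, zero_mul, sub_self]
    exact sub_eq_zero.mp (hred _ hsq)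
  have h2 : x * f = f * x * f := by
    have hz : f * (x * f - f * x * f) = 0 := by
      rw [mul_sub, ← mul_assoc, ← mul_assoc, ← mul_assoc, hf, sub_self]
    have hsq : (x * f - f * x * f) * (x * f - f * x * f) = 0 := by
      have e1 : (x * f - f * x * f) * (x * f - f * x * f)
          = x * (f * (x * f - f * x * f)) - f * x * (f * (x * f - f * x * f)) := by noncomm_ring
      rw [e1, hz, mul_zero, mul_zero, sub_self]
    exact sub_eq_zero.mp (hred _ hsq)
  rw [h1, h2]

/-- A semiprime right centrally quasi-morphic ring with von Neumann regular center
is strongly π-regular. -/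
theorem stronglyPiRegular_of_semiprime_rightCQM (R : Type*) [Ring R]
    (hsp : SemiprimeRing R) (hcqm : RightCentrallyQuasiMorphic R)
    (hZ : CenterVNRegular R) :
    StronglyPiRegular R := by
  have hred : ∀ a : R, a * a = 0 → a = 0 := reduced_of_semiprime_rightCQM R hsp hcqm
  intro a
  obtain ⟨b, c, hb, hc, -, hrid⟩ := hcqm a
  have hccomm : ∀ g : R, g * c = c * g := fun g => ((Set.mem_center_iff.mp hc).comm g).symm
  have hca : c * a = 0 := by
    have : a ∈ rAnn R c := by rw [← hrid]; exact ⟨1, (mul_one a).symm⟩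
    exact this
  obtain ⟨d, hd, hcd⟩ := hZ c hc
  have hdcomm : ∀ g : R, g * d = d * g := fun g => ((Set.mem_center_iff.mp hd).comm g).symm
  have hmem : (1 - c * d) ∈ rAnn R c := by
    show c * (1 - c * d) = 0
    rw [mul_sub, mul_one, ← mul_assoc]
    rw [show c * c * d = c * d * c by rw [mul_assoc c d c, hccomm d, ← mul_assoc]]
    rw [← hcd, sub_self]
  obtain ⟨s, hs⟩ : (1 - c * d) ∈ rIdeal R a := by rw [hrid]; exact hmem
  have hasa : a * s * a = a := by
    have h0 : c * d * a = 0 := by rw [← hccomm d, mul_assoc, hca, mul_zero]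
    have : a * s * a = (1 - c * d) * a := by rw [← hs]
    rw [this, sub_mul, one_mul, h0, sub_zero]
  -- f = a*s and e = s*a are idempotents, hence central
  have hfidem : (a * s) * (a * s) = a * s := by
    rw [← mul_assoc, hasa]
  have heidem : (s * a) * (s * a) = s * a := by
    rw [mul_assoc, ← mul_assoc a s a, hasa]
  have hfcen := idem_central_of_reduced R hred (a * s) hfidem
  have hecen := idem_central_of_reduced R hred (s * a) heidem
  refine ⟨1, le_refl 1, s, s, ?_, ?_⟩
  · -- a = a^2 * s
    simp only [pow_succ, pow_zero, one_mul]
    symm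
    rw [mul_assoc, ← hfcen a]
    exact hasa
  · -- a = s * a^2
    simp only [pow_succ, pow_zero, one_mul]
    symm
    rw [← mul_assoc, hecen a, ← mul_assoc]
    exact hasa
end

section
/- Let k be a field and let T be the ring of 2×2 upper triangular matrices over k. For the matrix a = E₁₂ (the matrix unit with 1 in position (1,2) and 0 elsewhere), there is no element b in the center Z(T) with rann_T(a) = bT. In particular, T is not right centrally quasi-morphic. -/
/-- The ring of 2×2 upper triangular matrices over `k`, as a subring of the
full matrix ring. -/
def UpperTriangular2 (k : Type*) [Field k] : Subring (Matrix (Fin 2) (Fin 2) k) where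
  carrier := {A | A 1 0 = 0}
  zero_mem' := by simp [Set.mem_setOf_eq]
  one_mem' := by simp [Set.mem_setOf_eq, Matrix.one_apply]
  add_mem' := by
    intro a b ha hb
    simp only [Set.mem_setOf_eq, Matrix.add_apply] at *
    simp [ha, hb]
  neg_mem' := by
    intro a ha
    simp only [Set.mem_setOf_eq, Matrix.neg_apply] at *
    simp [ha]
  mul_mem' := by
    intro a b ha hb
    simp only [Set.mem_setOf_eq, Matrix.mul_apply, Fin.sum_univ_two] at *
    simp [ha, hb]

/-- The matrix unit `E₁₂` as an element of the upper triangular matrix ring. -/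
def E12 (k : Type*) [Field k] : UpperTriangular2 k :=
  ⟨Matrix.of ![![0, 1], ![0, 0]], rfl⟩

namespace NotCQMAux

variable (k : Type*) [Field k]

/-- The matrix unit `E₁₁` in the upper triangular ring. -/
def E11 : UpperTriangular2 k := ⟨Matrix.of ![![1, 0], ![0, 0]], rfl⟩

lemma key : ¬ ∃ b : UpperTriangular2 k, b ∈ Set.center (UpperTriangular2 k) ∧
    rAnn (UpperTriangular2 k) (E12 k) = rIdeal (UpperTriangular2 k) b := by
  rintro ⟨b, hbc, hEq⟩
  have hcomm12 : (b : Matrix (Fin 2) (Fin 2) k) * (E12 k : Matrix (Fin 2) (Fin 2) k)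
      = (E12 k : Matrix (Fin 2) (Fin 2) k) * b := by
    have := hbc.comm (E12 k)
    exact_mod_cast congrArg (Subtype.val) this
  have hcomm11 : (b : Matrix (Fin 2) (Fin 2) k) * (E11 k : Matrix (Fin 2) (Fin 2) k)
      = (E11 k : Matrix (Fin 2) (Fin 2) k) * b := by
    have := hbc.comm (E11 k)
    exact_mod_cast congrArg (Subtype.val) this
  have hb10 : (b : Matrix (Fin 2) (Fin 2) k) 1 0 = 0 := b.2
  -- b ∈ bT = rAnn E12, so E12 * b = 0, i.e. b 1 1 = 0
  have hbmem : b ∈ rAnn (UpperTriangular2 k) (E12 k) := by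
    rw [hEq]; exact ⟨1, (mul_one b).symm⟩
  have hb11 : (b : Matrix (Fin 2) (Fin 2) k) 1 1 = 0 := by
    have h0 : (E12 k : Matrix (Fin 2) (Fin 2) k) * b = 0 := by
      exact_mod_cast congrArg Subtype.val hbmem
    have := congrFun (congrFun h0 0) 1
    simpa [E12, Matrix.mul_apply, Fin.sum_univ_two] using this
  have hb00 : (b : Matrix (Fin 2) (Fin 2) k) 0 0 = 0 := by
    have := congrFun (congrFun hcomm12 0) 1
    simpa [E12, Matrix.mul_apply, Fin.sum_univ_two, hb11] using this
  have hb01 : (b : Matrix (Fin 2) (Fin 2) k) 0 1 = 0 := by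
    have := congrFun (congrFun hcomm11 0) 1
    simpa [E11, Matrix.mul_apply, Fin.sum_univ_two] using this.symm
  have hb0 : b = 0 := by
    apply Subtype.ext
    ext i j
    fin_cases i <;> fin_cases j <;>
      simpa using (by assumption : _)
  -- E12 ∈ rAnn E12 = bT = {0}, contradiction
  have hEmem : E12 k ∈ rAnn (UpperTriangular2 k) (E12 k) := by
    show E12 k * E12 k = 0
    apply Subtype.ext
    show (E12 k : Matrix (Fin 2) (Fin 2) k) * (E12 k : Matrix (Fin 2) (Fin 2) k) = 0
    ext i j
    fin_cases i <;> fin_cases j <;>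
      simp [E12, Matrix.mul_apply, Fin.sum_univ_two]
  rw [hEq, hb0] at hEmem
  obtain ⟨s, hs⟩ := hEmem
  rw [zero_mul] at hs
  have := congrArg Subtype.val hs
  have h01 := congrFun (congrFun this 0) 1
  simp [E12] at h01

end NotCQMAux

/-- In the upper triangular 2×2 matrix ring over a field, the right annihilator of
`E₁₂` is not of the form `bT` for a central `b`; in particular the ring is not
right centrally quasi-morphic. -/
theorem upperTriangular_not_rightCQM (k : Type*) [Field k] :
    (¬ ∃ b : UpperTriangular2 k, b ∈ Set.center (UpperTriangular2 k) ∧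
      rAnn (UpperTriangular2 k) (E12 k) = rIdeal (UpperTriangular2 k) b) ∧
    ¬ RightCentrallyQuasiMorphic (UpperTriangular2 k) := by
  constructor
  · exact NotCQMAux.key k
  · intro h
    obtain ⟨b, c, hbc, _, hEq, _⟩ := h (E12 k)
    exact NotCQMAux.key k ⟨b, hbc, hEq⟩
end
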